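/- The sum of the Neumann half-plane heat kernel H_N(t,x,y,x',y') = (4πt)⁻¹·exp(−(x−x')²/(4t))·(exp(−(y−y')²/(4t)) + exp(−(y+y')²/(4t))) and the Robin correction H_corr(t,x,y,x',y') = −(κ·e^{κ(y+y')}·e^{κ²t}/√(4πt))·exp(−(x−x')²/(4t))·erfc((y+y')/√(4t) + κ√t) satisfies the Robin boundary condition: ∂_y(H_N + H_corr) = κ·(H_N + H_corr) at y = 0, for every t > 0, x, x' ∈ ℝ, y' ≥ 0. -/

import Mathlib

open Real

/-- The complementary error function `erfc(z) = (2/√π)·∫_z^∞ e^{−s²} ds`. -/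
noncomputable def erfc (z : ℝ) : ℝ :=
  (2 / Real.sqrt π) * ∫ s in Set.Ioi z, Real.exp (-s ^ 2)

lemma hasDerivAt_erfc (z : ℝ) :
    HasDerivAt erfc (-(2 / Real.sqrt π) * Real.exp (-z ^ 2)) z := by
  have hint : MeasureTheory.Integrable (fun s : ℝ => Real.exp (-s ^ 2)) := by
    have := integrable_exp_neg_mul_sq (b := (1:ℝ)) one_pos
    simpa using this
  have hcont : Continuous fun s : ℝ => Real.exp (-s ^ 2) := by continuity
  have key : ∀ w : ℝ, erfc w = erfc 0 - (2 / Real.sqrt π) * ∫ s in (0:ℝ)..w, Real.exp (-s ^ 2) := by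
    intro w
    have h1 : (∫ s in Set.Iic w, Real.exp (-s ^ 2)) + ∫ s in Set.Ioi w, Real.exp (-s ^ 2)
        = ∫ s : ℝ, Real.exp (-s ^ 2) :=
      intervalIntegral.integral_Iic_add_Ioi hint.integrableOn hint.integrableOn
    have h0 : (∫ s in Set.Iic (0:ℝ), Real.exp (-s ^ 2)) + ∫ s in Set.Ioi (0:ℝ), Real.exp (-s ^ 2)
        = ∫ s : ℝ, Real.exp (-s ^ 2) :=
      intervalIntegral.integral_Iic_add_Ioi hint.integrableOn hint.integrableOn
    have h2 : (∫ s in Set.Iic w, Real.exp (-s ^ 2)) - ∫ s in Set.Iic (0:ℝ), Real.exp (-s ^ 2)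
        = ∫ s in (0:ℝ)..w, Real.exp (-s ^ 2) :=
      intervalIntegral.integral_Iic_sub_Iic hint.integrableOn hint.integrableOn
    unfold erfc
    rw [← mul_sub]
    congr 1
    linarith [h1, h0, h2]
  have hF : HasDerivAt (fun w => erfc 0 - (2 / Real.sqrt π) * ∫ s in (0:ℝ)..w, Real.exp (-s ^ 2))
      (-(2 / Real.sqrt π) * Real.exp (-z ^ 2)) z := by
    have h := ((hcont.integral_hasStrictDerivAt 0 z).hasDerivAt.const_mul
      (2 / Real.sqrt π)).const_sub (erfc 0)
    rw [neg_mul]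
    exact h
  exact hF.congr_of_eventuallyEq (Filter.Eventually.of_forall key)

/-- The sum of the Neumann half-plane heat kernel and the Robin correction term
satisfies the Robin boundary condition `∂_y(H_N + H_corr) = κ·(H_N + H_corr)`
at `y = 0`, for every `t > 0`, `x, x' ∈ ℝ` and `y' ≥ 0`. -/
theorem robin_heat_kernel_boundary_condition (κ : ℝ) (hκ : 0 < κ) :
    let HN : ℝ → ℝ → ℝ → ℝ → ℝ → ℝ := fun t x y x' y' =>
      (4 * π * t)⁻¹ * Real.exp (-((x - x') ^ 2 / (4 * t))) *
        (Real.exp (-((y - y') ^ 2 / (4 * t))) + Real.exp (-((y + y') ^ 2 / (4 * t))))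
    let Hcorr : ℝ → ℝ → ℝ → ℝ → ℝ → ℝ := fun t x y x' y' =>
      -(κ * Real.exp (κ * (y + y')) * Real.exp (κ ^ 2 * t) / Real.sqrt (4 * π * t)) *
        Real.exp (-((x - x') ^ 2 / (4 * t))) *
        erfc ((y + y') / Real.sqrt (4 * t) + κ * Real.sqrt t)
    ∀ t : ℝ, 0 < t → ∀ x x' : ℝ, ∀ y' : ℝ, 0 ≤ y' →
      deriv (fun y => HN t x y x' y' + Hcorr t x y x' y') 0 =
        κ * (HN t x 0 x' y' + Hcorr t x 0 x' y') := by
  intro HN Hcorr t ht x x' y' hy'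
  have ha0 : 0 < Real.sqrt t := Real.sqrt_pos.mpr ht
  -- derivative of the Neumann part
  have e1 := ((((hasDerivAt_id (0:ℝ)).sub_const y').pow 2).div_const (4*t)).neg.exp
  have e2 := ((((hasDerivAt_id (0:ℝ)).add_const y').pow 2).div_const (4*t)).neg.exp
  have hN := (e1.add e2).const_mul ((4*π*t)⁻¹ * Real.exp (-((x - x') ^ 2 / (4 * t))))
  -- derivative of the correction part
  have hexp := (((hasDerivAt_id (0:ℝ)).add_const y').const_mul κ).exp
  have hu := ((((hexp.const_mul κ).mul_const (Real.exp (κ^2*t))).div_const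
      (Real.sqrt (4*π*t))).neg).mul_const (Real.exp (-((x - x') ^ 2 / (4 * t))))
  have hg := (((hasDerivAt_id (0:ℝ)).add_const y').div_const (Real.sqrt (4*t))).add_const
      (κ * Real.sqrt t)
  have herfc := HasDerivAt.comp (0:ℝ)
    (hasDerivAt_erfc ((0 + y') / Real.sqrt (4*t) + κ * Real.sqrt t)) hg
  have HD := hN.add (hu.mul herfc)
  refine HD.deriv.trans ?_
  simp only [HN, Hcorr, Function.comp, id_eq, zero_add, zero_sub, neg_sq, pow_one, mul_one,
    Nat.cast_ofNat, Pi.neg_apply, Pi.pow_apply]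
  set a := Real.sqrt t with ha
  set b := Real.sqrt π with hb
  have hb0 : 0 < b := Real.sqrt_pos.mpr pi_pos
  have haa : a * a = t := Real.mul_self_sqrt ht.le
  have hbb : b * b = π := Real.mul_self_sqrt pi_pos.le
  have ha' : a ≠ 0 := ne_of_gt ha0
  have hb' : b ≠ 0 := ne_of_gt hb0
  have hs4t : Real.sqrt (4*t) = 2*a := by
    rw [show (4:ℝ)*t = (2*a)^2 by linear_combination (-4:ℝ)*haa]
    exact Real.sqrt_sq (by positivity)
  have hs4pt : Real.sqrt (4*π*t) = 2*b*a := by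
    rw [show (4:ℝ)*π*t = (2*b*a)^2 by linear_combination (-4*t)*hbb + (-4*b*b)*haa]
    exact Real.sqrt_sq (by positivity)
  have expand : (y'/(2*a) + κ*a)^2 = y'^2/(4*t) + (κ*y' + κ^2*t) := by
    calc (y'/(2*a) + κ*a)^2
        = y'^2/(4*(a*a)) + (κ*y'*(a*a⁻¹) + κ^2*(a*a)) := by ring
      _ = y'^2/(4*t) + (κ*y' + κ^2*t) := by rw [mul_inv_cancel₀ ha', haa]; ring
  have hz : Real.exp (-(y' / (2*a) + κ*a)^2)
      = Real.exp (-(y'^2/(4*t))) / (Real.exp (κ*y') * Real.exp (κ^2*t)) := by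
    rw [eq_div_iff (by positivity), ← Real.exp_add, ← Real.exp_add]
    congr 1
    rw [expand]; ring
  rw [hs4t, hs4pt, hz, ← haa, ← hbb]
  field_simp
  ring
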